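/- For every positive integer q, ∑_{r=1}^{q} φ(gcd(q,r))^2 ≤ q^2. -/

import Mathlib

open Finset

theorem stmt5 (q : ℕ) (hq : 0 < q) :
    ∑ r ∈ Finset.Icc 1 q, (Nat.totient (Nat.gcd q r)) ^ 2 ≤ q ^ 2 := by
  have key : ∑ r ∈ Finset.Icc 1 q, (Nat.totient (Nat.gcd q r)) ^ 2
      = ∑ r ∈ Finset.range q, (Nat.totient (Nat.gcd q r)) ^ 2 := by
    have h1 : Finset.range (q+1) = insert 0 (Finset.Icc 1 q) := by
      ext x
      simp [Nat.lt_succ_iff, Nat.one_le_iff_ne_zero]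
      omega
    have h2 : ∑ r ∈ Finset.range (q+1), (Nat.totient (Nat.gcd q r)) ^ 2
        = Nat.totient q ^ 2 + ∑ r ∈ Finset.Icc 1 q, (Nat.totient (Nat.gcd q r)) ^ 2 := by
      rw [h1, Finset.sum_insert (by simp)]
      simp [Nat.gcd_zero_right]
    have h3 : ∑ r ∈ Finset.range (q+1), (Nat.totient (Nat.gcd q r)) ^ 2
        = (∑ r ∈ Finset.range q, (Nat.totient (Nat.gcd q r)) ^ 2) + Nat.totient q ^ 2 := by
      rw [Finset.sum_range_succ, Nat.gcd_self]
    omega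
  rw [key]
  have hfib : ∑ r ∈ Finset.range q, (Nat.totient (Nat.gcd q r)) ^ 2
      = ∑ d ∈ q.divisors, (Nat.totient (q / d)) * (Nat.totient d) ^ 2 := by
    rw [← Finset.sum_fiberwise_of_maps_to (g := fun x => Nat.gcd q x) (t := q.divisors)
      (fun x _ => Nat.mem_divisors.2 ⟨Nat.gcd_dvd_left q x, hq.ne'⟩)
      (fun r => (Nat.totient (Nat.gcd q r)) ^ 2)]
    refine Finset.sum_congr rfl fun d hd => ?_
    have hdvd : d ∣ q := Nat.dvd_of_mem_divisors hd
    rw [Nat.totient_div_of_dvd hdvd]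
    rw [Finset.sum_congr rfl (fun x hx => by
      rw [(Finset.mem_filter.1 hx).2])]
    rw [Finset.sum_const, smul_eq_mul]
  rw [hfib]
  calc ∑ d ∈ q.divisors, (Nat.totient (q / d)) * (Nat.totient d) ^ 2
      ≤ ∑ d ∈ q.divisors, q * Nat.totient d := by
        refine Finset.sum_le_sum fun d hd => ?_
        have hdvd : d ∣ q := Nat.dvd_of_mem_divisors hd
        have h1 : Nat.totient (q / d) ≤ q / d := Nat.totient_le _
        have h2 : Nat.totient d ≤ d := Nat.totient_le _
        calc Nat.totient (q / d) * Nat.totient d ^ 2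
            = (Nat.totient (q / d) * Nat.totient d) * Nat.totient d := by ring
          _ ≤ ((q / d) * d) * Nat.totient d := by
              exact Nat.mul_le_mul (Nat.mul_le_mul h1 h2) le_rfl
          _ = q * Nat.totient d := by rw [Nat.div_mul_cancel hdvd]
    _ = q * ∑ d ∈ q.divisors, Nat.totient d := by rw [Finset.mul_sum]
    _ = q * q := by rw [Nat.sum_totient]
    _ = q ^ 2 := (sq q).symm
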